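/- For every β > 0, the sum over all (m,n,p) ∈ ℤ³ of p²·exp(−β·R(m,n,p)) equals (2/3) times the sum over all (m,n,p) ∈ ℤ³ of R(m,n,p)·exp(−β·R(m,n,p)), where R(m,n,p) = m² + n² + p² + mp + np. -/

import Mathlib

open Real

private lemma summable_g {c : ℝ} (hc : 0 < c) :
    Summable (fun k : ℤ => (1 + (k:ℝ)^2) * Real.exp (-c * (k:ℝ)^2)) := by
  have hr : Real.exp (-c) < 1 := by
    rw [Real.exp_lt_one_iff]; linarith
  have hnat : Summable (fun n : ℕ => (1 + (n:ℝ)^2) * Real.exp (-c * (n:ℝ)^2)) := by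
    have hs : Summable (fun n : ℕ => (1 + (n:ℝ)^2) * (Real.exp (-c))^n) := by
      have h1 : Summable (fun n : ℕ => (Real.exp (-c))^n) :=
        summable_geometric_of_lt_one (Real.exp_pos _).le hr
      have h2 : Summable (fun n : ℕ => (n:ℝ)^2 * (Real.exp (-c))^n) := by
        have := summable_pow_mul_geometric_of_norm_lt_one (R := ℝ) 2
          (r := Real.exp (-c)) (by rwa [Real.norm_eq_abs, abs_of_pos (Real.exp_pos _)])
        simpa using this
      simpa [add_mul, one_mul] using h1.add h2
    refine Summable.of_nonneg_of_le (fun n => by positivity) (fun n => ?_) hs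
    apply mul_le_mul_of_nonneg_left _ (by positivity)
    rw [← Real.exp_nat_mul]
    apply Real.exp_le_exp.mpr
    have h0 : (n:ℝ) ≤ (n:ℝ)^2 := by
      exact_mod_cast Nat.le_self_pow (two_ne_zero) n
    have h1 : (0:ℝ) ≤ (n:ℝ)^2 - n := by linarith
    nlinarith [mul_nonneg hc.le h1]
  apply Summable.of_nat_of_neg
  · exact_mod_cast hnat
  · convert hnat using 2 with n
    · rfl
    push_cast; ring_nf

private lemma prod_ge (x y z : ℝ) :
    x^2 + y^2 + z^2 ≤ (1+x^2) * ((1+y^2) * (1+z^2)) := by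
  nlinarith [sq_nonneg x, sq_nonneg y, sq_nonneg z,
    mul_nonneg (sq_nonneg x) (sq_nonneg y), mul_nonneg (sq_nonneg y) (sq_nonneg z),
    mul_nonneg (sq_nonneg x) (sq_nonneg z),
    mul_nonneg (mul_nonneg (sq_nonneg x) (sq_nonneg y)) (sq_nonneg z)]

private lemma summable_wE {β : ℝ} (hβ : 0 < β) (w : ℤ × ℤ × ℤ → ℝ)
    (hw0 : ∀ v, 0 ≤ w v)
    (hw : ∀ m n p : ℤ, w (m, n, p) ≤
      3 * ((1 + (m:ℝ)^2) * ((1 + (n:ℝ)^2) * (1 + (p:ℝ)^2)))) :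
    Summable (fun v : ℤ × ℤ × ℤ => w v * Real.exp (-β * ((v.1:ℝ)^2 + (v.2.1:ℝ)^2
      + (v.2.2:ℝ)^2 + v.1 * v.2.2 + v.2.1 * v.2.2))) := by
  have hg := summable_g (c := β/4) (by linarith)
  have hG : Summable (fun v : ℤ × ℤ × ℤ =>
      ((1 + (v.1:ℝ)^2) * Real.exp (-(β/4) * (v.1:ℝ)^2)) *
      (((1 + (v.2.1:ℝ)^2) * Real.exp (-(β/4) * (v.2.1:ℝ)^2)) *
       ((1 + (v.2.2:ℝ)^2) * Real.exp (-(β/4) * (v.2.2:ℝ)^2)))) :=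
    hg.mul_of_nonneg (hg.mul_of_nonneg hg (fun k => by positivity) fun k => by positivity)
      (fun k => by positivity) fun v => by positivity
  refine Summable.of_nonneg_of_le (fun v => mul_nonneg (hw0 v) (Real.exp_pos _).le) (fun v => ?_) (hG.mul_left 3)
  obtain ⟨m, n, p⟩ := v
  have hq : (m:ℝ)^2 + (n:ℝ)^2 + (p:ℝ)^2
      ≤ 4 * ((m:ℝ)^2 + (n:ℝ)^2 + (p:ℝ)^2 + (m:ℝ)*(p:ℝ) + (n:ℝ)*(p:ℝ)) := by
    nlinarith [sq_nonneg (3*(m:ℝ) + 2*p), sq_nonneg (3*(n:ℝ) + 2*p), sq_nonneg (p:ℝ)]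
  have hexp : Real.exp (-β * ((m:ℝ)^2 + (n:ℝ)^2 + (p:ℝ)^2 + (m:ℝ)*(p:ℝ) + (n:ℝ)*(p:ℝ)))
      ≤ Real.exp (-(β/4) * (m:ℝ)^2) *
        (Real.exp (-(β/4) * (n:ℝ)^2) * Real.exp (-(β/4) * (p:ℝ)^2)) := by
    rw [← Real.exp_add, ← Real.exp_add]
    apply Real.exp_le_exp.mpr
    nlinarith [mul_nonneg hβ.le (by linarith :
      (0:ℝ) ≤ 4 * ((m:ℝ)^2 + (n:ℝ)^2 + (p:ℝ)^2 + (m:ℝ)*(p:ℝ) + (n:ℝ)*(p:ℝ))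
        - ((m:ℝ)^2 + (n:ℝ)^2 + (p:ℝ)^2))]
  have hA : (0:ℝ) ≤ (1 + (m:ℝ)^2) * ((1 + (n:ℝ)^2) * (1 + (p:ℝ)^2)) := by positivity
  calc w (m, n, p) * Real.exp (-β * ((m:ℝ)^2 + (n:ℝ)^2 + (p:ℝ)^2
        + (m:ℝ)*(p:ℝ) + (n:ℝ)*(p:ℝ)))
      ≤ (3 * ((1 + (m:ℝ)^2) * ((1 + (n:ℝ)^2) * (1 + (p:ℝ)^2)))) *
        (Real.exp (-(β/4) * (m:ℝ)^2) *
          (Real.exp (-(β/4) * (n:ℝ)^2) * Real.exp (-(β/4) * (p:ℝ)^2))) := by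
        apply mul_le_mul (hw m n p) hexp (Real.exp_pos _).le (by positivity)
    _ = 3 * (((1 + (m:ℝ)^2) * Real.exp (-(β/4) * (m:ℝ)^2)) *
        (((1 + (n:ℝ)^2) * Real.exp (-(β/4) * (n:ℝ)^2)) *
         ((1 + (p:ℝ)^2) * Real.exp (-(β/4) * (p:ℝ)^2)))) := by ring

private def eqv2 : ℤ × ℤ × ℤ ≃ ℤ × ℤ × ℤ where
  toFun v := (v.1 + v.2.2, v.1, v.2.1 - v.1)
  invFun v := (v.2.1, v.2.2 + v.2.1, v.1 - v.2.1)
  left_inv v := by obtain ⟨m, n, p⟩ := v; simp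
  right_inv v := by obtain ⟨m, n, p⟩ := v; simp

private def eqv3 : ℤ × ℤ × ℤ ≃ ℤ × ℤ × ℤ where
  toFun v := (v.1 + v.2.2, v.2.1 + v.2.2, -v.1 - v.2.1 - v.2.2)
  invFun v := (-v.2.1 - v.2.2, -v.1 - v.2.2, v.1 + v.2.1 + v.2.2)
  left_inv v := by obtain ⟨m, n, p⟩ := v; simp [Prod.ext_iff]; omega
  right_inv v := by obtain ⟨m, n, p⟩ := v; simp [Prod.ext_iff]; omega

theorem stmt7 (β : ℝ) (hβ : 0 < β) :
    ∑' v : ℤ × ℤ × ℤ,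
      ((v.2.2:ℝ)^2 *
        Real.exp (-β * ((v.1:ℝ)^2 + (v.2.1:ℝ)^2 + (v.2.2:ℝ)^2
          + v.1 * v.2.2 + v.2.1 * v.2.2)))
    = (2/3) * ∑' v : ℤ × ℤ × ℤ,
      (((v.1:ℝ)^2 + (v.2.1:ℝ)^2 + (v.2.2:ℝ)^2 + v.1 * v.2.2 + v.2.1 * v.2.2) *
        Real.exp (-β * ((v.1:ℝ)^2 + (v.2.1:ℝ)^2 + (v.2.2:ℝ)^2
          + v.1 * v.2.2 + v.2.1 * v.2.2))) := by
  have S1 : Summable (fun v : ℤ × ℤ × ℤ => (v.2.2:ℝ)^2 *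
      Real.exp (-β * ((v.1:ℝ)^2 + (v.2.1:ℝ)^2 + (v.2.2:ℝ)^2
        + v.1 * v.2.2 + v.2.1 * v.2.2))) := by
    refine summable_wE hβ (fun v => (v.2.2:ℝ)^2) (fun v => sq_nonneg _) fun m n p => ?_
    dsimp only
    nlinarith [prod_ge (m:ℝ) (n:ℝ) (p:ℝ), sq_nonneg (m:ℝ), sq_nonneg (n:ℝ), sq_nonneg (p:ℝ)]
  have S2 : Summable (fun v : ℤ × ℤ × ℤ => ((v.2.1:ℝ) - v.1)^2 *
      Real.exp (-β * ((v.1:ℝ)^2 + (v.2.1:ℝ)^2 + (v.2.2:ℝ)^2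
        + v.1 * v.2.2 + v.2.1 * v.2.2))) := by
    refine summable_wE hβ (fun v => ((v.2.1:ℝ) - v.1)^2) (fun v => sq_nonneg _) fun m n p => ?_
    dsimp only
    nlinarith [prod_ge (m:ℝ) (n:ℝ) (p:ℝ), sq_nonneg ((m:ℝ) + n), sq_nonneg (m:ℝ),
      sq_nonneg (n:ℝ), sq_nonneg (p:ℝ)]
  have S3 : Summable (fun v : ℤ × ℤ × ℤ => ((v.1:ℝ) + v.2.1 + v.2.2)^2 *
      Real.exp (-β * ((v.1:ℝ)^2 + (v.2.1:ℝ)^2 + (v.2.2:ℝ)^2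
        + v.1 * v.2.2 + v.2.1 * v.2.2))) := by
    refine summable_wE hβ (fun v => ((v.1:ℝ) + v.2.1 + v.2.2)^2)
      (fun v => sq_nonneg _) fun m n p => ?_
    dsimp only
    nlinarith [prod_ge (m:ℝ) (n:ℝ) (p:ℝ), sq_nonneg ((m:ℝ) - n), sq_nonneg ((n:ℝ) - p),
      sq_nonneg ((m:ℝ) - p), sq_nonneg (m:ℝ), sq_nonneg (n:ℝ), sq_nonneg (p:ℝ)]
  have h2 : ∑' v : ℤ × ℤ × ℤ, ((v.2.1:ℝ) - v.1)^2 *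
      Real.exp (-β * ((v.1:ℝ)^2 + (v.2.1:ℝ)^2 + (v.2.2:ℝ)^2
        + v.1 * v.2.2 + v.2.1 * v.2.2))
      = ∑' v : ℤ × ℤ × ℤ, (v.2.2:ℝ)^2 *
      Real.exp (-β * ((v.1:ℝ)^2 + (v.2.1:ℝ)^2 + (v.2.2:ℝ)^2
        + v.1 * v.2.2 + v.2.1 * v.2.2)) := by
    rw [← eqv2.tsum_eq (fun v : ℤ × ℤ × ℤ => (v.2.2:ℝ)^2 *
      Real.exp (-β * ((v.1:ℝ)^2 + (v.2.1:ℝ)^2 + (v.2.2:ℝ)^2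
        + v.1 * v.2.2 + v.2.1 * v.2.2)))]
    refine tsum_congr fun v => ?_
    obtain ⟨m, n, p⟩ := v
    simp only [eqv2, Equiv.coe_fn_mk]
    push_cast
    ring_nf
  have h3 : ∑' v : ℤ × ℤ × ℤ, ((v.1:ℝ) + v.2.1 + v.2.2)^2 *
      Real.exp (-β * ((v.1:ℝ)^2 + (v.2.1:ℝ)^2 + (v.2.2:ℝ)^2
        + v.1 * v.2.2 + v.2.1 * v.2.2))
      = ∑' v : ℤ × ℤ × ℤ, (v.2.2:ℝ)^2 *
      Real.exp (-β * ((v.1:ℝ)^2 + (v.2.1:ℝ)^2 + (v.2.2:ℝ)^2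
        + v.1 * v.2.2 + v.2.1 * v.2.2)) := by
    rw [← eqv3.tsum_eq (fun v : ℤ × ℤ × ℤ => (v.2.2:ℝ)^2 *
      Real.exp (-β * ((v.1:ℝ)^2 + (v.2.1:ℝ)^2 + (v.2.2:ℝ)^2
        + v.1 * v.2.2 + v.2.1 * v.2.2)))]
    refine tsum_congr fun v => ?_
    obtain ⟨m, n, p⟩ := v
    simp only [eqv3, Equiv.coe_fn_mk]
    push_cast
    ring_nf
  have key : 2 * ∑' v : ℤ × ℤ × ℤ,
      (((v.1:ℝ)^2 + (v.2.1:ℝ)^2 + (v.2.2:ℝ)^2 + v.1 * v.2.2 + v.2.1 * v.2.2) *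
        Real.exp (-β * ((v.1:ℝ)^2 + (v.2.1:ℝ)^2 + (v.2.2:ℝ)^2
          + v.1 * v.2.2 + v.2.1 * v.2.2)))
      = 3 * ∑' v : ℤ × ℤ × ℤ, (v.2.2:ℝ)^2 *
      Real.exp (-β * ((v.1:ℝ)^2 + (v.2.1:ℝ)^2 + (v.2.2:ℝ)^2
        + v.1 * v.2.2 + v.2.1 * v.2.2)) := by
    rw [← tsum_mul_left]
    rw [show (fun v : ℤ × ℤ × ℤ => 2 *
        (((v.1:ℝ)^2 + (v.2.1:ℝ)^2 + (v.2.2:ℝ)^2 + v.1 * v.2.2 + v.2.1 * v.2.2) *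
          Real.exp (-β * ((v.1:ℝ)^2 + (v.2.1:ℝ)^2 + (v.2.2:ℝ)^2
            + v.1 * v.2.2 + v.2.1 * v.2.2))))
      = fun v : ℤ × ℤ × ℤ =>
        ((v.2.2:ℝ)^2 * Real.exp (-β * ((v.1:ℝ)^2 + (v.2.1:ℝ)^2 + (v.2.2:ℝ)^2
          + v.1 * v.2.2 + v.2.1 * v.2.2)))
        + ((((v.2.1:ℝ) - v.1)^2 * Real.exp (-β * ((v.1:ℝ)^2 + (v.2.1:ℝ)^2 + (v.2.2:ℝ)^2
          + v.1 * v.2.2 + v.2.1 * v.2.2)))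
          + (((v.1:ℝ) + v.2.1 + v.2.2)^2 *
            Real.exp (-β * ((v.1:ℝ)^2 + (v.2.1:ℝ)^2 + (v.2.2:ℝ)^2
              + v.1 * v.2.2 + v.2.1 * v.2.2))))
      from funext fun v => by ring]
    rw [Summable.tsum_add S1 (S2.add S3), Summable.tsum_add S2 S3, h2, h3]
    ring
  linarith [key]
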